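/- Let a < b be real numbers, let f : (a,b) → ℝ be n times differentiable on (a,b) for a positive integer n, and suppose that for each k ∈ {0, 1, ..., n} the one-sided limit f^{(k)}(a+) = lim_{x→a+} f^{(k)}(x) exists and is finite, and that the one-sided limit f(b-) = lim_{x→b-} f(x) exists and is finite. If the n-th derivative f^{(n)} is strictly increasing on (a,b), then for all x ∈ (a,b): T_n(x) < f(x) < 𝕋_n(x), where T_n(x) = Σ_{k=0}^{n} f^{(k)}(a+)/k! · (x-a)^k is the first Taylor approximation of f in the right neighborhood of a, and 𝕋_n(x) = T_{n-1}(x) + (f(b-) - T_{n-1}(b)) · ((x-a)/(b-a))^n is the second Taylor approximation of f in the right neighborhood of a. -/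

import Mathlib

open Real Set Filter

/-- strictly monotone function with right limit at `a` is above its limit -/
lemma lim_lt_of_strictMonoOn {a b L : ℝ} {g : ℝ → ℝ} (hab : a < b)
    (hm : StrictMonoOn g (Set.Ioo a b))
    (hL : Tendsto g (nhdsWithin a (Set.Ioo a b)) (nhds L)) :
    ∀ x ∈ Set.Ioo a b, L < g x := by
  have key : ∀ x ∈ Set.Ioo a b, L ≤ g x := by
    intro x hx
    haveI : (nhdsWithin a (Set.Ioo a b)).NeBot :=
      mem_closure_iff_nhdsWithin_neBot.mp
        (by rw [closure_Ioo hab.ne]; exact Set.left_mem_Icc.mpr hab.le)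
    refine le_of_tendsto hL ?_
    filter_upwards [self_mem_nhdsWithin,
      mem_nhdsWithin_of_mem_nhds (Iio_mem_nhds hx.1)] with z hz hzx
    exact (hm hz hx hzx).le
  intro x hx
  have hy : (a + x) / 2 ∈ Set.Ioo a b :=
    ⟨by linarith [hx.1], by linarith [hx.1, hx.2]⟩
  exact lt_of_le_of_lt (key _ hy) (hm hy hx (by linarith [hx.1]))

/-- strictly monotone function with left limit at `b` is below its limit -/
lemma lt_lim_of_strictMonoOn {a b L : ℝ} {g : ℝ → ℝ} (hab : a < b)
    (hm : StrictMonoOn g (Set.Ioo a b))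
    (hL : Tendsto g (nhdsWithin b (Set.Ioo a b)) (nhds L)) :
    ∀ x ∈ Set.Ioo a b, g x < L := by
  have key : ∀ x ∈ Set.Ioo a b, g x ≤ L := by
    intro x hx
    haveI : (nhdsWithin b (Set.Ioo a b)).NeBot :=
      mem_closure_iff_nhdsWithin_neBot.mp
        (by rw [closure_Ioo hab.ne]; exact Set.right_mem_Icc.mpr hab.le)
    refine ge_of_tendsto hL ?_
    filter_upwards [self_mem_nhdsWithin,
      mem_nhdsWithin_of_mem_nhds (Ioi_mem_nhds hx.2)] with z hz hzx
    exact (hm hx hz hzx).le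
  intro x hx
  have hy : (x + b) / 2 ∈ Set.Ioo a b :=
    ⟨by linarith [hx.1, hx.2], by linarith [hx.2]⟩
  exact lt_of_lt_of_le (hm hx hy (by linarith [hx.2])) (key _ hy)

lemma pos_of_deriv_pos_of_tendsto_zero {a b : ℝ} {g : ℝ → ℝ} (hab : a < b)
    (hdiff : DifferentiableOn ℝ g (Set.Ioo a b))
    (hpos : ∀ x ∈ Set.Ioo a b, 0 < deriv g x)
    (h0 : Tendsto g (nhdsWithin a (Set.Ioo a b)) (nhds 0)) :
    ∀ x ∈ Set.Ioo a b, 0 < g x := by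
  have hm : StrictMonoOn g (Set.Ioo a b) :=
    strictMonoOn_of_deriv_pos (convex_Ioo a b) hdiff.continuousOn
      (by rwa [interior_Ioo])
  exact lim_lt_of_strictMonoOn hab hm h0

lemma hasDerivAt_taylor_poly (la : ℕ → ℝ) (a x : ℝ) (m : ℕ) :
    HasDerivAt
      (fun y => ∑ k ∈ Finset.range (m + 1), la k / (Nat.factorial k : ℝ) * (y - a) ^ k)
      (∑ k ∈ Finset.range m, la (k + 1) / (Nat.factorial k : ℝ) * (x - a) ^ k) x := by
  have h : ∀ k ∈ Finset.range (m + 1),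
      HasDerivAt (fun y => la k / (Nat.factorial k : ℝ) * (y - a) ^ k)
        (la k / (Nat.factorial k : ℝ) * ((k : ℝ) * (x - a) ^ (k - 1) * 1)) x := by
    intro k _
    exact (((hasDerivAt_id x).sub_const a).pow k).const_mul _
  have H : HasDerivAt
      (fun y => ∑ k ∈ Finset.range (m + 1), la k / (Nat.factorial k : ℝ) * (y - a) ^ k)
      (∑ k ∈ Finset.range (m + 1), la k / (Nat.factorial k : ℝ) * ((k : ℝ) * (x - a) ^ (k - 1) * 1)) x :=
    HasDerivAt.fun_sum h
  convert H using 1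
  rw [Finset.sum_range_succ']
  simp only [Nat.cast_zero, pow_zero, mul_one, zero_mul, mul_zero, add_zero]
  refine (Finset.sum_congr rfl fun k _ => ?_).symm
  have hf : ((k + 1).factorial : ℝ) = (k + 1) * (k.factorial : ℝ) := by
    rw [Nat.factorial_succ]; push_cast; ring
  have hk : (k.factorial : ℝ) ≠ 0 := Nat.cast_ne_zero.mpr k.factorial_ne_zero
  rw [hf]
  push_cast
  field_simp

/-- L'Hôpital-type monotonicity rule for denominators `(x-a)^m`. -/
lemma lhopital_mono {a b : ℝ} (hab : a < b) (m : ℕ) (hm : 1 ≤ m) (N : ℝ → ℝ)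
    (hN : DifferentiableOn ℝ N (Set.Ioo a b))
    (h0 : Tendsto N (nhdsWithin a (Set.Ioo a b)) (nhds 0))
    (hmono : StrictMonoOn (fun x => deriv N x / (x - a) ^ (m - 1)) (Set.Ioo a b)) :
    StrictMonoOn (fun x => N x / (x - a) ^ m) (Set.Ioo a b) := by
  have hNat : ∀ t ∈ Set.Ioo a b, HasDerivAt N (deriv N t) t := by
    intro t ht
    exact ((hN t ht).differentiableAt (Ioo_mem_nhds ht.1 ht.2)).hasDerivAt
  set Nt : ℝ → ℝ := Function.update N a 0 with hNtdef
  have hNteq : ∀ t : ℝ, t ≠ a → Nt t = N t := fun t ht => Function.update_of_ne ht _ _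
  intro x hx y hy hxy
  -- Continuity of Nt on Icc a x
  have hNtc : ContinuousOn Nt (Set.Icc a x) := by
    intro t ht
    rcases eq_or_ne t a with rfl | hta
    · have hval : Nt t = 0 := by rw [hNtdef]; simp
      rw [show Set.Icc t x = insert t (Set.Ioc t x) from (Set.Ioc_insert_left hx.1.le).symm]
      rw [continuousWithinAt_insert_self]
      have h1 : Tendsto N (nhdsWithin t (Set.Ioc t x)) (nhds 0) :=
        h0.mono_left (nhdsWithin_mono t (fun z hz => ⟨hz.1, lt_of_le_of_lt hz.2 hx.2⟩))
      have h2 : Tendsto Nt (nhdsWithin t (Set.Ioc t x)) (nhds 0) := by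
        refine h1.congr' ?_
        filter_upwards [self_mem_nhdsWithin] with z hz
        exact (hNteq z (ne_of_gt hz.1)).symm
      rw [← hval] at h2
      exact h2
    · have hta' : a < t := lt_of_le_of_ne ht.1 (Ne.symm hta)
      have htb : t < b := lt_of_le_of_lt ht.2 hx.2
      have : ContinuousAt Nt t := by
        refine (hNat t ⟨hta', htb⟩).continuousAt.congr ?_
        filter_upwards [eventually_ne_nhds hta] with z hz
        exact (hNteq z hz).symm
      exact this.continuousWithinAt
  have hNtd : ∀ t ∈ Set.Ioo a x, HasDerivAt Nt (deriv N t) t := by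
    intro t ht
    refine (hNat t ⟨ht.1, ht.2.trans hx.2⟩).congr_of_eventuallyEq ?_
    filter_upwards [eventually_ne_nhds (ne_of_gt ht.1)] with z hz
    exact hNteq z hz
  -- denominator
  have hDd : ∀ t : ℝ, HasDerivAt (fun s => (s - a) ^ m) ((m : ℝ) * (t - a) ^ (m - 1) * 1) t :=
    fun t => ((hasDerivAt_id t).sub_const a).pow m
  have hDc : ∀ s t : ℝ, ContinuousOn (fun s => (s - a) ^ m) (Set.Icc s t) :=
    fun s t => ((continuous_pow m).comp (continuous_id.sub continuous_const)).continuousOn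
  -- Cauchy MVT on [a, x]
  obtain ⟨c, hc, hceq⟩ := exists_ratio_hasDerivAt_eq_ratio_slope Nt (fun t => deriv N t)
    hx.1 hNtc hNtd (fun s => (s - a) ^ m) (fun t => (m : ℝ) * (t - a) ^ (m - 1) * 1)
    (hDc a x) (fun t _ => hDd t)
  -- Cauchy MVT on [x, y]
  have hIcc : Set.Icc x y ⊆ Set.Ioo a b := fun z hz =>
    ⟨lt_of_lt_of_le hx.1 hz.1, lt_of_le_of_lt hz.2 hy.2⟩
  obtain ⟨c', hc', hceq'⟩ := exists_ratio_hasDerivAt_eq_ratio_slope N (fun t => deriv N t)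
    hxy (hN.continuousOn.mono hIcc) (fun t ht => hNat t (hIcc (Set.Ioo_subset_Icc_self ht)))
    (fun s => (s - a) ^ m) (fun t => (m : ℝ) * (t - a) ^ (m - 1) * 1)
    (hDc x y) (fun t _ => hDd t)
  -- now the algebra
  have hcmem : c ∈ Set.Ioo a b := ⟨hc.1, hc.2.trans hx.2⟩
  have hcmem' : c' ∈ Set.Ioo a b := ⟨hx.1.trans hc'.1, hc'.2.trans hy.2⟩
  have hlt : deriv N c / (c - a) ^ (m - 1) < deriv N c' / (c' - a) ^ (m - 1) :=
    hmono hcmem hcmem' (hc.2.trans hc'.1)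
  have hupos : 0 < (c - a) ^ (m - 1) := pow_pos (by linarith [hc.1]) _
  have hvpos : 0 < (c' - a) ^ (m - 1) := pow_pos (by linarith [hcmem'.1]) _
  have hppos : 0 < (x - a) ^ m := pow_pos (by linarith [hx.1]) _
  have hqpos : 0 < (y - a) ^ m := pow_pos (by linarith [hx.1, hxy]) _
  have hpq : (x - a) ^ m < (y - a) ^ m :=
    pow_lt_pow_left₀ (by linarith) (by linarith [hx.1]) (by omega)
  -- rewrite the MVT equality on [a,x]
  have ha0 : ((a : ℝ) - a) ^ m = 0 := by
    rw [sub_self]; exact zero_pow (by omega)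
  rw [hNteq x (ne_of_gt hx.1), ha0, sub_zero] at hceq
  have hNta : Nt a = 0 := by rw [hNtdef]; simp
  rw [hNta, sub_zero] at hceq
  have hmpos : (0 : ℝ) < (m : ℝ) := by exact_mod_cast hm
  have e1 : N x / (x - a) ^ m = deriv N c / (c - a) ^ (m - 1) / (m : ℝ) := by
    rw [div_div, div_eq_div_iff hppos.ne' (by positivity)]
    linear_combination -hceq
  have e2 : (N y - N x) / ((y - a) ^ m - (x - a) ^ m)
      = deriv N c' / (c' - a) ^ (m - 1) / (m : ℝ) := by
    rw [div_div, div_eq_div_iff (by linarith : ((y - a) ^ m - (x - a) ^ m) ≠ 0) (by positivity)]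
    linear_combination -hceq'
  have e3 : N x / (x - a) ^ m < (N y - N x) / ((y - a) ^ m - (x - a) ^ m) := by
    rw [e1, e2]
    gcongr
  have e4 := (div_lt_div_iff₀ hppos (by linarith : (0:ℝ) < (y - a) ^ m - (x - a) ^ m)).mp e3
  have key : N x * (y - a) ^ m < N y * (x - a) ^ m := by nlinarith [e4]
  show N x / (x - a) ^ m < N y / (y - a) ^ m
  exact (div_lt_div_iff₀ hppos hqpos).mpr key

/-- Master lemma: lower Taylor bound and monotonicity of the remainder quotient. -/
lemma taylor_master (n : ℕ) : ∀ (a b : ℝ), a < b → ∀ (f : ℝ → ℝ) (la : ℕ → ℝ),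
    (∀ k < n, DifferentiableOn ℝ (iteratedDeriv k f) (Set.Ioo a b)) →
    (∀ k ≤ n, Tendsto (iteratedDeriv k f) (nhdsWithin a (Set.Ioo a b)) (nhds (la k))) →
    StrictMonoOn (iteratedDeriv n f) (Set.Ioo a b) →
    (∀ x ∈ Set.Ioo a b,
      (∑ k ∈ Finset.range (n + 1), la k / (Nat.factorial k : ℝ) * (x - a) ^ k) < f x) ∧
    StrictMonoOn
      (fun x => (f x - ∑ k ∈ Finset.range n, la k / (Nat.factorial k : ℝ) * (x - a) ^ k)
        / (x - a) ^ n) (Set.Ioo a b) := by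
  induction n with
  | zero =>
    intro a b hab f la hdiff hla hmono
    rw [iteratedDeriv_zero] at hmono
    have h0 := hla 0 le_rfl
    rw [iteratedDeriv_zero] at h0
    constructor
    · intro x hx
      have := lim_lt_of_strictMonoOn hab hmono h0 x hx
      simpa using this
    · simpa using hmono
  | succ n ih =>
    intro a b hab f la hdiff hla hmono
    have hdiff0 : DifferentiableOn ℝ f (Set.Ioo a b) := by
      have := hdiff 0 (Nat.succ_pos n)
      rwa [iteratedDeriv_zero] at this
    have hfat : ∀ x ∈ Set.Ioo a b, HasDerivAt f (deriv f x) x := fun x hx =>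
      ((hdiff0 x hx).differentiableAt (Ioo_mem_nhds hx.1 hx.2)).hasDerivAt
    -- apply IH to deriv f
    obtain ⟨ih1, ih2⟩ := ih a b hab (deriv f) (fun k => la (k + 1))
      (fun k hk => by rw [← iteratedDeriv_succ']; exact hdiff (k + 1) (by omega))
      (fun k hk => by rw [← iteratedDeriv_succ']; exact hla (k + 1) (by omega))
      (by rw [← iteratedDeriv_succ']; exact hmono)
    have hf0 : Tendsto f (nhdsWithin a (Set.Ioo a b)) (nhds (la 0)) := by
      have := hla 0 (Nat.zero_le _)
      rwa [iteratedDeriv_zero] at this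
    -- limit of remainders at a
    have hpoly_lim : ∀ m : ℕ, Tendsto
        (fun x => f x - ∑ k ∈ Finset.range (m + 1), la k / (Nat.factorial k : ℝ) * (x - a) ^ k)
        (nhdsWithin a (Set.Ioo a b)) (nhds 0) := by
      intro m
      have hc : Continuous
          (fun x : ℝ => ∑ k ∈ Finset.range (m + 1), la k / (Nat.factorial k : ℝ) * (x - a) ^ k) :=
        continuous_finset_sum _ fun k _ =>
          continuous_const.mul ((continuous_id.sub continuous_const).pow k)
      have hval : (∑ k ∈ Finset.range (m + 1), la k / (Nat.factorial k : ℝ) * (a - a) ^ k)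
          = la 0 := by
        rw [Finset.sum_eq_single_of_mem 0 (Finset.mem_range.mpr (Nat.succ_pos m))]
        · simp
        · intro k _ hk
          simp [sub_self, zero_pow hk]
      have hP : Tendsto
          (fun x : ℝ => ∑ k ∈ Finset.range (m + 1), la k / (Nat.factorial k : ℝ) * (x - a) ^ k)
          (nhdsWithin a (Set.Ioo a b)) (nhds (la 0)) := by
        have := (hc.tendsto a).mono_left (nhdsWithin_le_nhds (s := Set.Ioo a b))
        rwa [hval] at this
      simpa using hf0.sub hP
    constructor
    · -- lower bound
      intro x hx
      have hφdiff : DifferentiableOn ℝ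
          (fun x => f x - ∑ k ∈ Finset.range (n + 2), la k / (Nat.factorial k : ℝ) * (x - a) ^ k)
          (Set.Ioo a b) := by
        intro t ht
        exact ((hdiff0 t ht).sub
          (hasDerivAt_taylor_poly la a t (n + 1)).differentiableAt.differentiableWithinAt)
      have hφderiv : ∀ t ∈ Set.Ioo a b, HasDerivAt
          (fun x => f x - ∑ k ∈ Finset.range (n + 2), la k / (Nat.factorial k : ℝ) * (x - a) ^ k)
          (deriv f t - ∑ k ∈ Finset.range (n + 1), la (k + 1) / (Nat.factorial k : ℝ) * (t - a) ^ k)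
          t := fun t ht => (hfat t ht).sub (hasDerivAt_taylor_poly la a t (n + 1))
      have hpos := pos_of_deriv_pos_of_tendsto_zero hab hφdiff
        (fun t ht => by
          rw [(hφderiv t ht).deriv]
          have := ih1 t ht
          linarith)
        (hpoly_lim (n + 1))
      have := hpos x hx
      linarith
    · -- strict monotonicity of the remainder quotient
      have hNdiff : DifferentiableOn ℝ
          (fun x => f x - ∑ k ∈ Finset.range (n + 1), la k / (Nat.factorial k : ℝ) * (x - a) ^ k)
          (Set.Ioo a b) := by
        intro t ht
        exact ((hdiff0 t ht).sub
          (hasDerivAt_taylor_poly la a t n).differentiableAt.differentiableWithinAt)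
      have hNderiv : ∀ t ∈ Set.Ioo a b, deriv
          (fun x => f x - ∑ k ∈ Finset.range (n + 1), la k / (Nat.factorial k : ℝ) * (x - a) ^ k) t
          = deriv f t - ∑ k ∈ Finset.range n, la (k + 1) / (Nat.factorial k : ℝ) * (t - a) ^ k :=
        fun t ht => ((hfat t ht).sub (hasDerivAt_taylor_poly la a t n)).deriv
      refine lhopital_mono hab (n + 1) (Nat.succ_le_succ (Nat.zero_le n)) _ hNdiff
        (hpoly_lim n) ?_
      intro x hx y hy hxy
      have := ih2 hx hy hxy
      simp only [Nat.add_sub_cancel]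
      rw [hNderiv x hx, hNderiv y hy]
      exact this

theorem double_sided_taylor_increasing
    (a b : ℝ) (hab : a < b) (f : ℝ → ℝ) (n : ℕ) (hn : 0 < n)
    (hdiff : ∀ k < n, DifferentiableOn ℝ (iteratedDeriv k f) (Ioo a b))
    (la : ℕ → ℝ)
    (hla : ∀ k ≤ n, Tendsto (iteratedDeriv k f) (nhdsWithin a (Ioo a b)) (nhds (la k)))
    (lb : ℝ)
    (hlb : Tendsto f (nhdsWithin b (Ioo a b)) (nhds lb))
    (hmono : StrictMonoOn (iteratedDeriv n f) (Ioo a b)) :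
    ∀ x ∈ Ioo a b,
      (∑ k ∈ Finset.range (n + 1), la k / (Nat.factorial k : ℝ) * (x - a) ^ k) < f x ∧
      f x < (∑ k ∈ Finset.range n, la k / (Nat.factorial k : ℝ) * (x - a) ^ k) +
        (lb - ∑ k ∈ Finset.range n, la k / (Nat.factorial k : ℝ) * (b - a) ^ k) *
          ((x - a) / (b - a)) ^ n := by
  obtain ⟨h1, h2⟩ := taylor_master n a b hab f la hdiff hla hmono
  intro x hx
  refine ⟨h1 x hx, ?_⟩
  -- limit of the quotient at b
  have hc : Continuous
      (fun x : ℝ => ∑ k ∈ Finset.range n, la k / (Nat.factorial k : ℝ) * (x - a) ^ k) :=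
    continuous_finset_sum _ fun k _ =>
      continuous_const.mul ((continuous_id.sub continuous_const).pow k)
  have hP : Tendsto
      (fun x : ℝ => ∑ k ∈ Finset.range n, la k / (Nat.factorial k : ℝ) * (x - a) ^ k)
      (nhdsWithin b (Ioo a b))
      (nhds (∑ k ∈ Finset.range n, la k / (Nat.factorial k : ℝ) * (b - a) ^ k)) :=
    (hc.tendsto b).mono_left nhdsWithin_le_nhds
  have hD : Tendsto (fun x : ℝ => (x - a) ^ n) (nhdsWithin b (Ioo a b)) (nhds ((b - a) ^ n)) :=
    (((continuous_id.sub continuous_const).pow n).tendsto b).mono_left nhdsWithin_le_nhds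
  have hbane : ((b : ℝ) - a) ^ n ≠ 0 := pow_ne_zero n (by linarith)
  have hG : Tendsto
      (fun x => (f x - ∑ k ∈ Finset.range n, la k / (Nat.factorial k : ℝ) * (x - a) ^ k)
        / (x - a) ^ n)
      (nhdsWithin b (Ioo a b))
      (nhds ((lb - ∑ k ∈ Finset.range n, la k / (Nat.factorial k : ℝ) * (b - a) ^ k)
        / (b - a) ^ n)) :=
    (hlb.sub hP).div hD hbane
  have hlt := lt_lim_of_strictMonoOn hab h2 hG x hx
  have hxp : 0 < (x - a) ^ n := pow_pos (by linarith [hx.1]) _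
  have hbp : 0 < ((b : ℝ) - a) ^ n := pow_pos (by linarith) _
  rw [div_lt_div_iff₀ hxp hbp] at hlt
  have hpow : ((x - a) / (b - a)) ^ n = (x - a) ^ n / (b - a) ^ n := div_pow _ _ _
  rw [hpow]
  rw [show (∑ k ∈ Finset.range n, la k / (Nat.factorial k : ℝ) * (x - a) ^ k) +
      (lb - ∑ k ∈ Finset.range n, la k / (Nat.factorial k : ℝ) * (b - a) ^ k) *
        ((x - a) ^ n / (b - a) ^ n)
      = (∑ k ∈ Finset.range n, la k / (Nat.factorial k : ℝ) * (x - a) ^ k) +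
      (lb - ∑ k ∈ Finset.range n, la k / (Nat.factorial k : ℝ) * (b - a) ^ k) *
        (x - a) ^ n / (b - a) ^ n from by ring]
  have hfin := (lt_div_iff₀ hbp).mpr hlt
  linarith [hfin]
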